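/- Let K be a nonnegative integrable kernel with ∫_ℝ K = 1, c ≥ 2, β > 1 and b > 1 + 2β. Let φ₊ be a strictly increasing C² solution of φ₊''(t) − cφ₊'(t) + g_β(φ₊(t)) = 0 with lim_{t→−∞} φ₊(t) = 0 and lim_{t→+∞} φ₊(t) = 2β. Then for every continuous bounded φ : ℝ → ℝ with 0 ≤ φ(t) ≤ φ₊(t) for all t ∈ ℝ, one has 0 ≤ (A_m φ)(t) ≤ φ₊(t) for all t ∈ ℝ. -/

import Mathlib

open Filter MeasureTheory Real Set

noncomputable def conv (K φ : ℝ → ℝ) (t : ℝ) : ℝ := ∫ s, K s * φ (t - s)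

noncomputable def gbeta (β u : ℝ) : ℝ := if u ≤ β then u else max 0 (2 * β - u)

/-- `z₁ < 0`, the negative root of `z² - cz - b = 0` (for `b > 0`). -/
noncomputable def zneg (c b : ℝ) : ℝ := (c - Real.sqrt (c ^ 2 + 4 * b)) / 2

/-- `z₂ > 0`, the positive root of `z² - cz - b = 0` (for `b > 0`). -/
noncomputable def zpos (c b : ℝ) : ℝ := (c + Real.sqrt (c ^ 2 + 4 * b)) / 2

/-- `r(φ)(t) = bφ(t) + g_β(φ(t))(1 - (K*φ)(t))`. -/
noncomputable def rop (K : ℝ → ℝ) (β b : ℝ) (φ : ℝ → ℝ) (t : ℝ) : ℝ :=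
  b * φ t + gbeta β (φ t) * (1 - conv K φ t)

/-- The integral operator
`(A_m φ)(t) = (1/z₁₂)[∫_{-∞}^t e^{z₁(t-s)} r(φ)(s) ds
              + ∫_t^{+∞} e^{z₂(t-s)} r(φ)(s) ds]`. -/
noncomputable def Am (K : ℝ → ℝ) (c β b : ℝ) (φ : ℝ → ℝ) (t : ℝ) : ℝ :=
  (1 / (zpos c b - zneg c b)) *
    ((∫ s in Iic t, Real.exp (zneg c b * (t - s)) * rop K β b φ s) +
     (∫ s in Ici t, Real.exp (zpos c b * (t - s)) * rop K β b φ s))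


lemma gbeta_eq_min (β : ℝ) (hβ : 0 ≤ β) (u : ℝ) :
    gbeta β u = min u (max 0 (2 * β - u)) := by
  unfold gbeta
  rcases le_or_gt u β with h | h
  · rw [if_pos h, min_eq_left]
    exact le_max_of_le_right (by linarith)
  · rw [if_neg (not_le.mpr h), min_eq_right]
    rcases le_or_gt (2*β - u) 0 with h2 | h2
    · rw [max_eq_left h2]; linarith
    · rw [max_eq_right h2.le]; linarith

lemma gbeta_continuous (β : ℝ) (hβ : 0 ≤ β) : Continuous (gbeta β) := by
  have : gbeta β = fun u => min u (max 0 (2 * β - u)) := funext (gbeta_eq_min β hβ)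
  rw [this]
  exact continuous_id.min (continuous_const.max (continuous_const.sub continuous_id))

lemma gbeta_nonneg {β u : ℝ} (hu : 0 ≤ u) : 0 ≤ gbeta β u := by
  unfold gbeta; split
  · exact hu
  · exact le_max_left _ _

lemma gbeta_le_self {β u : ℝ} (hu : 0 ≤ u) : gbeta β u ≤ u := by
  unfold gbeta; split
  · exact le_rfl
  · next h => exact max_le hu (by linarith [not_le.mp h])

lemma gbeta_le_beta {β : ℝ} (hβ : 0 ≤ β) (u : ℝ) : gbeta β u ≤ β := by
  unfold gbeta; split
  · assumption
  · next h => exact max_le hβ (by linarith [not_le.mp h])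

lemma gbeta_lip {β u v : ℝ} (huv : u ≤ v) : gbeta β u - gbeta β v ≤ v - u := by
  unfold gbeta
  rcases le_or_gt u β with h1 | h1 <;> rcases le_or_gt v β with h2 | h2 <;>
    simp only [if_pos, if_neg, not_le, h1, h2]
  · linarith
  · rcases le_or_gt (2*β - v) 0 with h3 | h3
    · rw [max_eq_left h3]; linarith
    · rw [max_eq_right h3.le]; linarith
  · linarith
  · rcases le_or_gt (2*β - u) 0 with h3 | h3
    · rw [max_eq_left h3, max_eq_left (by linarith : 2*β - v ≤ 0)]; linarith
    · rw [max_eq_right h3.le]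
      have := le_max_right 0 (2*β - v)
      linarith

lemma gbeta_add_mono {β b u v : ℝ} (hb : 1 ≤ b) (huv : u ≤ v) :
    b * u + gbeta β u ≤ b * v + gbeta β v := by
  have h := gbeta_lip (β := β) huv
  nlinarith



lemma zfacts {c b : ℝ} (hc : 0 ≤ c) (hb : 0 < b) :
    zneg c b < 0 ∧ 0 < zpos c b ∧ zneg c b + zpos c b = c ∧ zneg c b * zpos c b = -b := by
  have h0 : (0:ℝ) ≤ c^2 + 4*b := by nlinarith
  have hsq : Real.sqrt (c^2 + 4*b) ^ 2 = c^2 + 4*b := Real.sq_sqrt h0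
  have hlt : c < Real.sqrt (c^2 + 4*b) := by
    nlinarith [Real.sqrt_nonneg (c^2 + 4*b)]
  exact ⟨by unfold zneg; linarith, by unfold zpos; linarith,
    by unfold zneg zpos; ring, by unfold zneg zpos; nlinarith⟩

lemma exp_integrableOn_Ici {a t : ℝ} (ha : 0 < a) :
    IntegrableOn (fun s => Real.exp (a * (t - s))) (Ici t) := by
  rw [integrableOn_Ici_iff_integrableOn_Ioi]
  have h : IntegrableOn (fun x => Real.exp (a*t) * Real.exp (-a * x)) (Ioi t) :=
    (exp_neg_integrableOn_Ioi t ha).const_mul (Real.exp (a * t))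
  refine h.congr_fun (fun s _ => ?_) measurableSet_Ioi
  beta_reduce
  rw [← Real.exp_add]; ring_nf

lemma exp_integrableOn_Iic {a t : ℝ} (ha : a < 0) :
    IntegrableOn (fun s => Real.exp (a * (t - s))) (Iic t) := by
  have key : IntegrableOn ((fun s => Real.exp (a * (t - s))) ∘ (fun x : ℝ => -x)) (Ici (-t)) := by
    rw [integrableOn_Ici_iff_integrableOn_Ioi]
    have h : IntegrableOn (fun x => Real.exp (a*t) * Real.exp (-(-a) * x)) (Ioi (-t)) :=
      (exp_neg_integrableOn_Ioi (-t) (neg_pos.mpr ha)).const_mul (Real.exp (a * t))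
    refine h.congr_fun (fun s _ => ?_) measurableSet_Ioi
    simp only [Function.comp]
    rw [← Real.exp_add]; ring_nf
  have hemb : MeasurableEmbedding (fun x : ℝ => -x) :=
    (Homeomorph.neg ℝ).isClosedEmbedding.measurableEmbedding
  have hpre : (fun x : ℝ => -x) ⁻¹' (Iic t) = Ici (-t) := by
    ext x; simp [neg_le]
  have := (MeasurePreserving.integrableOn_comp_preimage
    (Measure.measurePreserving_neg (volume : Measure ℝ)) hemb
    (f := fun s => Real.exp (a * (t - s))) (s := Iic t)).1
  rw [hpre] at this
  exact this key


lemma mono_deriv_nonneg {f : ℝ → ℝ} (hf : Differentiable ℝ f) (hm : Monotone f) (s : ℝ) :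
    0 ≤ deriv f s := by
  have h := hasDerivAt_iff_tendsto_slope.mp (hf s).hasDerivAt
  have h' : Tendsto (slope f s) (nhdsWithin s (Ioi s)) (nhds (deriv f s)) :=
    h.mono_left (nhdsWithin_mono s (fun x hx => ne_of_gt hx))
  refine ge_of_tendsto h' ?_
  filter_upwards [self_mem_nhdsWithin] with x hx
  have : (0:ℝ) < x - s := by simpa using sub_pos.mpr (mem_Ioi.mp hx)
  rw [slope_def_field]
  exact div_nonneg (sub_nonneg.mpr (hm (le_of_lt hx))) this.le

lemma deriv_bound {c β : ℝ} (hc : 0 < c) {φp : ℝ → ℝ} (hd1 : Differentiable ℝ φp)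
    (hdv : Differentiable ℝ (deriv φp))
    (hODE : ∀ s, deriv (deriv φp) s = c * deriv φp s - gbeta β (φp s))
    (hg0 : ∀ s, 0 ≤ gbeta β (φp s)) (hv0 : ∀ s, 0 ≤ deriv φp s)
    (hφbd : ∀ t, φp t - φp (t - 1) ≤ 2 * β) :
    ∀ t, deriv φp t ≤ 2 * β * Real.exp c := by
  have hvc : Continuous (deriv φp) := hdv.continuous
  set w : ℝ → ℝ := fun s => Real.exp (-c * s) * deriv φp s with hw
  have hw' : ∀ s, HasDerivAt w (Real.exp (-c * s) * (-(gbeta β (φp s)))) s := by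
    intro s
    have h1 : HasDerivAt (fun s : ℝ => -c * s) (-c) s := by
      simpa using (hasDerivAt_id s).const_mul (-c)
    have h2 := h1.exp
    have h3 : HasDerivAt (deriv φp) (deriv (deriv φp) s) s := (hdv s).hasDerivAt
    have : HasDerivAt (fun y => Real.exp (-c * y) * deriv φp y) _ s := h2.mul h3
    convert this using 1
    rw [hODE s]; ring
  have hwa : Antitone w := by
    apply antitone_of_deriv_nonpos (fun s => (hw' s).differentiableAt)
    intro s
    rw [(hw' s).deriv]
    have := hg0 s
    have := Real.exp_pos (-c * s)
    nlinarith
  intro t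
  have hlow : ∀ s ∈ Icc (t - 1) t, Real.exp (-c) * deriv φp t ≤ deriv φp s := by
    intro s hs
    have hws := hwa hs.2
    -- w t ≤ w s : exp(-c t) v t ≤ exp(-c s) v s
    have h1 : Real.exp (-c) * deriv φp t ≤ Real.exp (c * (s - t)) * deriv φp t := by
      apply mul_le_mul_of_nonneg_right _ (hv0 t)
      apply Real.exp_le_exp.mpr
      nlinarith [hs.1]
    refine h1.trans ?_
    have h2 : Real.exp (c * (s - t)) * deriv φp t =
        Real.exp (c * s) * (Real.exp (-c * t) * deriv φp t) := by
      rw [← mul_assoc, ← Real.exp_add]; ring_nf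
    have h3 : Real.exp (c * s) * (Real.exp (-c * s) * deriv φp s) = deriv φp s := by
      rw [← mul_assoc, ← Real.exp_add]; simp
    rw [h2, ← h3]
    exact mul_le_mul_of_nonneg_left hws (Real.exp_pos _).le
  have hFTC : ∫ s in (t-1)..t, deriv φp s = φp t - φp (t - 1) := by
    apply intervalIntegral.integral_deriv_eq_sub (fun x _ => hd1 x)
    exact hvc.intervalIntegrable _ _
  have hmono : ∫ s in (t-1)..t, (Real.exp (-c) * deriv φp t) ≤ ∫ s in (t-1)..t, deriv φp s := by
    apply intervalIntegral.integral_mono_on (by linarith)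
      (intervalIntegrable_const) (hvc.intervalIntegrable _ _)
    exact hlow
  rw [hFTC] at hmono
  rw [intervalIntegral.integral_const] at hmono
  have : Real.exp (-c) * deriv φp t ≤ 2*β := by
    have := hφbd t
    have h4 : (t - (t-1)) = (1:ℝ) := by ring
    rw [h4, one_smul] at hmono
    linarith
  have hec : Real.exp (-c) * Real.exp c = 1 := by rw [← Real.exp_add]; simp
  have hid : deriv φp t = (Real.exp (-c) * deriv φp t) * Real.exp c := by
    rw [mul_comm (Real.exp (-c)), mul_assoc, hec, mul_one]
  rw [hid]
  exact mul_le_mul_of_nonneg_right this (Real.exp_pos c).le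




lemma green {z₁ z₂ c β b : ℝ} (hz1 : z₁ < 0) (hz2 : 0 < z₂)
    (hsum : z₁ + z₂ = c) (hprod : z₁ * z₂ = -b)
    {φp : ℝ → ℝ} (hd1 : Differentiable ℝ φp) (hdv : Differentiable ℝ (deriv φp))
    (hODE : ∀ s, deriv (deriv φp) s = c * deriv φp s - gbeta β (φp s))
    (hcont_h : Continuous (fun s => b * φp s + gbeta β (φp s)))
    (hbdφ : ∃ C, ∀ s, |φp s| ≤ C) (hbdv : ∃ C, ∀ s, |deriv φp s| ≤ C)
    (hbdh : ∃ C, ∀ s, |b * φp s + gbeta β (φp s)| ≤ C) (t : ℝ) :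
    ((∫ s in Iic t, Real.exp (z₁ * (t - s)) * (b * φp s + gbeta β (φp s)))
        = z₂ * φp t - deriv φp t) ∧
    ((∫ s in Ici t, Real.exp (z₂ * (t - s)) * (b * φp s + gbeta β (φp s)))
        = deriv φp t - z₁ * φp t) := by
  have hc' : c = z₁ + z₂ := by linarith
  have hb' : b = -(z₁ * z₂) := by linarith
  subst hc' hb'
  obtain ⟨Cp, hCp⟩ := hbdφ
  obtain ⟨Cv, hCv⟩ := hbdv
  obtain ⟨Ch, hCh⟩ := hbdh
  set h : ℝ → ℝ := fun s => -(z₁ * z₂) * φp s + gbeta β (φp s) with hhdef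
  -- integrability of the two integrands
  have hChn : ∀ s, ‖h s‖ ≤ Ch := by
    intro s
    rw [hhdef, Real.norm_eq_abs]
    exact hCh s
  have hint1 : IntegrableOn (fun s => Real.exp (z₁ * (t - s)) * h s) (Iic t) := by
    have h1 : IntegrableOn (fun s => h s * Real.exp (z₁ * (t - s))) (Iic t) :=
      (exp_integrableOn_Iic (a := z₁) (t := t) hz1).bdd_mul
        (hcont_h.aestronglyMeasurable.restrict) (ae_of_all _ hChn)
    exact h1.congr_fun (fun s _ => mul_comm _ _) measurableSet_Iic
  have hint2 : IntegrableOn (fun s => Real.exp (z₂ * (t - s)) * h s) (Ici t) := by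
    have h1 : IntegrableOn (fun s => h s * Real.exp (z₂ * (t - s))) (Ici t) :=
      (exp_integrableOn_Ici (a := z₂) (t := t) hz2).bdd_mul
        (hcont_h.aestronglyMeasurable.restrict) (ae_of_all _ hChn)
    exact h1.congr_fun (fun s _ => mul_comm _ _) measurableSet_Ici
  -- derivative identities
  have hF1 : ∀ s, HasDerivAt (fun s => -(Real.exp (z₁ * (t - s)) * (deriv φp s - z₂ * φp s)))
      (Real.exp (z₁ * (t - s)) * h s) s := by
    intro s
    have h1 : HasDerivAt (fun s : ℝ => z₁ * (t - s)) (z₁ * (-1)) s :=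
      ((hasDerivAt_id s).const_sub t).const_mul z₁
    have h2 := h1.exp
    have h3 : HasDerivAt (fun s => deriv φp s - z₂ * φp s)
        (deriv (deriv φp) s - z₂ * deriv φp s) s :=
      ((hdv s).hasDerivAt).sub (((hd1 s).hasDerivAt).const_mul z₂)
    have : HasDerivAt (fun s => -(Real.exp (z₁ * (t - s)) * (deriv φp s - z₂ * φp s))) _ s :=
      (h2.mul h3).neg
    convert this using 1
    rw [hODE s]; simp only [hhdef]; ring
  have hF2 : ∀ s, HasDerivAt (fun s => -(Real.exp (z₂ * (t - s)) * (deriv φp s - z₁ * φp s)))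
      (Real.exp (z₂ * (t - s)) * h s) s := by
    intro s
    have h1 : HasDerivAt (fun s : ℝ => z₂ * (t - s)) (z₂ * (-1)) s :=
      ((hasDerivAt_id s).const_sub t).const_mul z₂
    have h3 : HasDerivAt (fun s => deriv φp s - z₁ * φp s)
        (deriv (deriv φp) s - z₁ * deriv φp s) s :=
      ((hdv s).hasDerivAt).sub (((hd1 s).hasDerivAt).const_mul z₁)
    have : HasDerivAt (fun s => -(Real.exp (z₂ * (t - s)) * (deriv φp s - z₁ * φp s))) _ s :=
      (h1.exp.mul h3).neg
    convert this using 1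
    rw [hODE s]; simp only [hhdef]; ring
  -- limits
  have hlim1 : Tendsto (fun s => -(Real.exp (z₁ * (t - s)) * (deriv φp s - z₂ * φp s)))
      atBot (nhds 0) := by
    apply squeeze_zero_norm (a := fun s => (Cv + |z₂| * Cp) * Real.exp (z₁ * (t - s)))
    · intro s
      rw [norm_neg, norm_mul, Real.norm_eq_abs, Real.norm_eq_abs, Real.abs_exp, mul_comm]
      apply mul_le_mul_of_nonneg_right _ (Real.exp_pos _).le
      calc |deriv φp s - z₂ * φp s| ≤ |deriv φp s| + |z₂ * φp s| := abs_sub _ _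
        _ ≤ Cv + |z₂| * Cp := by
            rw [abs_mul]
            exact add_le_add (hCv s) (mul_le_mul_of_nonneg_left (hCp s) (abs_nonneg _))
    · have harg : Tendsto (fun s => z₁ * (t - s)) atBot atBot := by
        have : Tendsto (fun s : ℝ => (-z₁) * s) atBot atBot :=
          tendsto_id.const_mul_atBot (by linarith)
        have h2 := tendsto_atBot_add_const_left atBot (z₁ * t) this
        refine h2.congr (fun s => by ring)
      have := (Real.tendsto_exp_atBot.comp harg).const_mul (Cv + |z₂| * Cp)
      simpa using this
  have hlim2 : Tendsto (fun s => -(Real.exp (z₂ * (t - s)) * (deriv φp s - z₁ * φp s)))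
      atTop (nhds 0) := by
    apply squeeze_zero_norm (a := fun s => (Cv + |z₁| * Cp) * Real.exp (z₂ * (t - s)))
    · intro s
      rw [norm_neg, norm_mul, Real.norm_eq_abs, Real.norm_eq_abs, Real.abs_exp, mul_comm]
      apply mul_le_mul_of_nonneg_right _ (Real.exp_pos _).le
      calc |deriv φp s - z₁ * φp s| ≤ |deriv φp s| + |z₁ * φp s| := abs_sub _ _
        _ ≤ Cv + |z₁| * Cp := by
            rw [abs_mul]
            exact add_le_add (hCv s) (mul_le_mul_of_nonneg_left (hCp s) (abs_nonneg _))
    · have harg : Tendsto (fun s => z₂ * (t - s)) atTop atBot := by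
        refine (tendsto_const_mul_atBot_of_pos hz2).mpr ?_
        have h0 : Tendsto (fun s : ℝ => -s) atTop atBot := tendsto_neg_atTop_atBot
        have h2 := tendsto_atBot_add_const_left atTop t h0
        exact h2.congr (fun s => by ring)
      have := (Real.tendsto_exp_atBot.comp harg).const_mul (Cv + |z₁| * Cp)
      simpa using this
  constructor
  · have := integral_Iic_of_hasDerivAt_of_tendsto' (a := t)
      (fun x _ => hF1 x) hint1 hlim1
    rw [this]
    simp
  · have key := integral_Ioi_of_hasDerivAt_of_tendsto' (a := t)
      (fun x _ => hF2 x) (hint2.mono_set Ioi_subset_Ici_self) hlim2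
    rw [integral_Ici_eq_integral_Ioi, key]
    simp

lemma exp_mul_intOn_Iic {a t C : ℝ} (ha : a < 0) {f : ℝ → ℝ} (hf : Continuous f)
    (hC : ∀ s, |f s| ≤ C) :
    IntegrableOn (fun s => Real.exp (a * (t - s)) * f s) (Iic t) := by
  have h1 : IntegrableOn (fun s => f s * Real.exp (a * (t - s))) (Iic t) :=
    (exp_integrableOn_Iic (t := t) ha).bdd_mul (hf.aestronglyMeasurable.restrict)
      (ae_of_all _ fun s => by rw [Real.norm_eq_abs]; exact hC s)
  exact h1.congr_fun (fun s _ => mul_comm _ _) measurableSet_Iic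

lemma exp_mul_intOn_Ici {a t C : ℝ} (ha : 0 < a) {f : ℝ → ℝ} (hf : Continuous f)
    (hC : ∀ s, |f s| ≤ C) :
    IntegrableOn (fun s => Real.exp (a * (t - s)) * f s) (Ici t) := by
  have h1 : IntegrableOn (fun s => f s * Real.exp (a * (t - s))) (Ici t) :=
    (exp_integrableOn_Ici (t := t) ha).bdd_mul (hf.aestronglyMeasurable.restrict)
      (ae_of_all _ fun s => by rw [Real.norm_eq_abs]; exact hC s)
  exact h1.congr_fun (fun s _ => mul_comm _ _) measurableSet_Ici


/-- `φ₊` is an upper solution — if `0 ≤ φ ≤ φ₊` then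
`0 ≤ A_m φ ≤ φ₊`. -/
theorem Am_upper_solution
    (K : ℝ → ℝ) (hKi : Integrable K)
    (hK0 : ∀ᵐ s ∂(volume : Measure ℝ), 0 ≤ K s)
    (hK1 : (∫ s, K s) = 1)
    (c β b : ℝ) (hc : 2 ≤ c) (hβ : 1 < β) (hb : 1 + 2 * β < b)
    (φp : ℝ → ℝ) (hφpC : ContDiff ℝ 2 φp) (hφpMono : StrictMono φp)
    (hφpEq : ∀ t, deriv (deriv φp) t - c * deriv φp t + gbeta β (φp t) = 0)
    (hφpBot : Tendsto φp atBot (nhds 0))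
    (hφpTop : Tendsto φp atTop (nhds (2 * β)))
    (φ : ℝ → ℝ) (hφcont : Continuous φ) (hφbdd : ∃ M, ∀ t, |φ t| ≤ M)
    (hφle : ∀ t, 0 ≤ φ t ∧ φ t ≤ φp t) :
    ∀ t, 0 ≤ Am K c β b φ t ∧ Am K c β b φ t ≤ φp t := by
  have hβ0 : (0:ℝ) < β := by linarith
  have hb0 : (0:ℝ) < b := by linarith
  obtain ⟨hz1, hz2, hzsum, hzprod⟩ := zfacts (c := c) (b := b) (by linarith) hb0
  have hz12 : 0 < zpos c b - zneg c b := by linarith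
  -- φp facts
  have hφpMon : Monotone φp := hφpMono.monotone
  have hφp_nonneg : ∀ s, 0 ≤ φp s := fun s =>
    le_of_tendsto hφpBot (by filter_upwards [eventually_le_atBot s] with x hx using hφpMon hx)
  have hφp_le2β : ∀ s, φp s ≤ 2*β := fun s =>
    ge_of_tendsto hφpTop (by filter_upwards [eventually_ge_atTop s] with x hx using hφpMon hx)
  -- smoothness
  have h2 : ContDiff ℝ ((1:WithTop ℕ∞) + 1) φp := by convert hφpC using 2; norm_num
  obtain ⟨hd1, -, hC1⟩ := contDiff_succ_iff_deriv.mp h2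
  have hdv : Differentiable ℝ (deriv φp) := hC1.differentiable one_ne_zero
  have hφpc : Continuous φp := hd1.continuous
  have hODE : ∀ s, deriv (deriv φp) s = c * deriv φp s - gbeta β (φp s) := fun s => by
    linarith [hφpEq s]
  have hv0 : ∀ s, 0 ≤ deriv φp s := mono_deriv_nonneg hd1 hφpMon
  have hvB : ∀ s, deriv φp s ≤ 2*β*Real.exp c :=
    deriv_bound (by linarith) hd1 hdv hODE (fun s => gbeta_nonneg (β := β) (hφp_nonneg s)) hv0
      (fun t => by linarith [hφp_nonneg (t-1), hφp_le2β t])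
  -- the majorant function h
  have hgφp_cont : Continuous (fun s => gbeta β (φp s)) := (gbeta_continuous β hβ0.le).comp hφpc
  have hhcont : Continuous (fun s => b * φp s + gbeta β (φp s)) :=
    (continuous_const.mul hφpc).add hgφp_cont
  have hecp : (0:ℝ) < Real.exp c := Real.exp_pos c
  have hbφ : ∃ C, ∀ s, |φp s| ≤ C :=
    ⟨2*β, fun s => abs_le.mpr ⟨by linarith [hφp_nonneg s], hφp_le2β s⟩⟩
  have hbv : ∃ C, ∀ s, |deriv φp s| ≤ C :=
    ⟨2*β*Real.exp c, fun s => abs_le.mpr ⟨by nlinarith [hv0 s], hvB s⟩⟩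
  have hhB : ∀ s, |b * φp s + gbeta β (φp s)| ≤ b*(2*β) + β := by
    intro s
    have h1 := gbeta_nonneg (β := β) (hφp_nonneg s)
    have h2 := gbeta_le_beta (β := β) hβ0.le (φp s)
    have h3 := hφp_nonneg s
    have h4 := hφp_le2β s
    rw [abs_le]
    constructor <;> nlinarith
  have hgreen := green hz1 hz2 (by linarith) hzprod hd1 hdv hODE hhcont hbφ hbv
    ⟨b*(2*β) + β, hhB⟩
  -- φ and convolution facts
  obtain ⟨M, hM⟩ := hφbdd
  have hφ0 : ∀ s, 0 ≤ φ s := fun s => (hφle s).1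
  have hφle2β : ∀ s, φ s ≤ 2*β := fun s => le_trans (hφle s).2 (hφp_le2β s)
  have hconvc : Continuous (conv K φ) := by
    have heq : conv K φ = MeasureTheory.convolution K φ (ContinuousLinearMap.mul ℝ ℝ) volume := by
      funext x
      simp [conv, MeasureTheory.convolution, ContinuousLinearMap.mul_apply']
    rw [heq]
    have hbdd : BddAbove (range fun x => ‖φ x‖) := by
      refine ⟨M, ?_⟩
      rintro x ⟨s, rfl⟩
      simpa [Real.norm_eq_abs] using hM s
    exact hbdd.continuous_convolution_right_of_integrable (ContinuousLinearMap.mul ℝ ℝ) hKi hφcont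
  have hKφint : ∀ t, Integrable (fun s => K s * φ (t - s)) := by
    intro t
    have h1 : Integrable (fun s => φ (t - s) * K s) :=
      hKi.bdd_mul ((hφcont.comp (continuous_const.sub continuous_id)).aestronglyMeasurable)
        (ae_of_all _ fun s => by simpa [Real.norm_eq_abs] using hM (t - s))
    exact h1.congr (ae_of_all _ fun s => mul_comm _ _)
  have hconv0 : ∀ t, 0 ≤ conv K φ t := fun t =>
    integral_nonneg_of_ae (by filter_upwards [hK0] with s hs using mul_nonneg hs (hφ0 _))
  have hconv2β : ∀ t, conv K φ t ≤ 2*β := by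
    intro t
    have hle : (fun s => K s * φ (t - s)) ≤ᵐ[volume] fun s => K s * (2*β) := by
      filter_upwards [hK0] with s hs using mul_le_mul_of_nonneg_left (hφle2β _) hs
    have hmono := integral_mono_ae (hKφint t) (hKi.mul_const _) hle
    calc conv K φ t ≤ ∫ s, K s * (2*β) := hmono
      _ = (∫ s, K s) * (2*β) := integral_mul_const _ _
      _ = 2*β := by rw [hK1]; ring
  -- facts about rop
  have hrc : Continuous (rop K β b φ) := by
    unfold rop
    exact (continuous_const.mul hφcont).add
      (((gbeta_continuous β hβ0.le).comp hφcont).mul (continuous_const.sub hconvc))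
  have hr0 : ∀ s, 0 ≤ rop K β b φ s := by
    intro s
    unfold rop
    have h1 : 0 ≤ gbeta β (φ s) := gbeta_nonneg (β := β) (hφ0 s)
    have h2 : gbeta β (φ s) ≤ φ s := gbeta_le_self (β := β) (hφ0 s)
    have h3 := hconv0 s
    have h4 := hconv2β s
    have h5 := hφ0 s
    nlinarith [mul_le_mul h2 h4 h3 h5]
  have hrle : ∀ s, rop K β b φ s ≤ b * φp s + gbeta β (φp s) := by
    intro s
    unfold rop
    have h1 : 0 ≤ gbeta β (φ s) := gbeta_nonneg (β := β) (hφ0 s)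
    have h3 := hconv0 s
    have h6 : b * φ s + gbeta β (φ s) ≤ b * φp s + gbeta β (φp s) :=
      gbeta_add_mono (by linarith) (hφle s).2
    nlinarith
  have hrB : ∀ s, |rop K β b φ s| ≤ b*(2*β) + β := by
    intro s
    have hnn : (0:ℝ) ≤ b*(2*β)+β := by positivity
    rw [abs_le]
    refine ⟨by linarith [hr0 s], (hrle s).trans ?_⟩
    have := hhB s
    rw [abs_le] at this
    exact this.2
  -- conclusion
  intro t
  obtain ⟨hg1, hg2⟩ := hgreen t
  have hJ1int : IntegrableOn (fun s => Real.exp (zneg c b * (t - s)) * rop K β b φ s) (Iic t) :=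
    exp_mul_intOn_Iic hz1 hrc hrB
  have hJ2int : IntegrableOn (fun s => Real.exp (zpos c b * (t - s)) * rop K β b φ s) (Ici t) :=
    exp_mul_intOn_Ici hz2 hrc hrB
  have hI1int : IntegrableOn
      (fun s => Real.exp (zneg c b * (t - s)) * (b * φp s + gbeta β (φp s))) (Iic t) :=
    exp_mul_intOn_Iic hz1 hhcont hhB
  have hI2int : IntegrableOn
      (fun s => Real.exp (zpos c b * (t - s)) * (b * φp s + gbeta β (φp s))) (Ici t) :=
    exp_mul_intOn_Ici hz2 hhcont hhB
  have hJ1nn : 0 ≤ ∫ s in Iic t, Real.exp (zneg c b * (t - s)) * rop K β b φ s :=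
    setIntegral_nonneg measurableSet_Iic fun s _ => mul_nonneg (Real.exp_pos _).le (hr0 s)
  have hJ2nn : 0 ≤ ∫ s in Ici t, Real.exp (zpos c b * (t - s)) * rop K β b φ s :=
    setIntegral_nonneg measurableSet_Ici fun s _ => mul_nonneg (Real.exp_pos _).le (hr0 s)
  have hJ1le : (∫ s in Iic t, Real.exp (zneg c b * (t - s)) * rop K β b φ s) ≤
      ∫ s in Iic t, Real.exp (zneg c b * (t - s)) * (b * φp s + gbeta β (φp s)) :=
    setIntegral_mono_on hJ1int hI1int measurableSet_Iic
      (fun s _ => mul_le_mul_of_nonneg_left (hrle s) (Real.exp_pos _).le)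
  have hJ2le : (∫ s in Ici t, Real.exp (zpos c b * (t - s)) * rop K β b φ s) ≤
      ∫ s in Ici t, Real.exp (zpos c b * (t - s)) * (b * φp s + gbeta β (φp s)) :=
    setIntegral_mono_on hJ2int hI2int measurableSet_Ici
      (fun s _ => mul_le_mul_of_nonneg_left (hrle s) (Real.exp_pos _).le)
  constructor
  · unfold Am
    have : (0:ℝ) < 1 / (zpos c b - zneg c b) := by positivity
    exact mul_nonneg this.le (by linarith)
  · unfold Am
    have hpos : (0:ℝ) < 1 / (zpos c b - zneg c b) := by positivity
    have hsum : (∫ s in Iic t, Real.exp (zneg c b * (t - s)) * rop K β b φ s) +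
        (∫ s in Ici t, Real.exp (zpos c b * (t - s)) * rop K β b φ s) ≤
        (zpos c b - zneg c b) * φp t := by
      rw [← sub_nonneg]
      have := hg1
      have := hg2
      nlinarith [hJ1le, hJ2le]
    calc (1 / (zpos c b - zneg c b)) *
        ((∫ s in Iic t, Real.exp (zneg c b * (t - s)) * rop K β b φ s) +
         (∫ s in Ici t, Real.exp (zpos c b * (t - s)) * rop K β b φ s))
        ≤ (1 / (zpos c b - zneg c b)) * ((zpos c b - zneg c b) * φp t) :=
          mul_le_mul_of_nonneg_left hsum hpos.le
      _ = φp t := by field_simp
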